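/- Let G be a graph obtained from a graph F by blowing up each vertex v ∈ V(F) into a nonempty clique K_v. Let u₁, u, v, v₁ be an induced path of F such that u and v both have degree exactly 2 in F. If |K_u| ≤ ω(G)/2, then the degree of any vertex of K_v in G equals |K_u| + |K_v| − 1 + |K_{v₁}|, which is at most (3/2)·ω(G) − 1. -/

import Mathlib

open SimpleGraph

/-- The graph obtained from `F` by blowing up each vertex `v` into a clique `K_v` of size
`k v`: the cliques are pairwise complete or anticomplete according to adjacency in `F`. -/
def blowup {α : Type*} (F : SimpleGraph α) (k : α → ℕ) : SimpleGraph (Σ v, Fin (k v)) where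
  Adj a b := (a.1 = b.1 ∧ a ≠ b) ∨ F.Adj a.1 b.1
  symm := by
    constructor
    rintro a b (⟨h1, h2⟩ | h)
    · exact Or.inl ⟨h1.symm, h2.symm⟩
    · exact Or.inr h.symm
  loopless := by
    constructor
    rintro a (⟨-, h⟩ | h)
    · exact h rfl
    · exact F.loopless.irrefl _ h

lemma blowup_edge_bound {α : Type*} [Fintype α] (F : SimpleGraph α) (k : α → ℕ)
    {a b : α} (hab : F.Adj a b) : k a + k b ≤ (blowup F k).cliqueNum := by
  classical
  set s : Finset (Σ v, Fin (k v)) :=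
    (Finset.univ.image fun j : Fin (k a) => (⟨a, j⟩ : Σ v, Fin (k v))) ∪
    (Finset.univ.image fun j : Fin (k b) => (⟨b, j⟩ : Σ v, Fin (k v))) with hs
  have hclique : (blowup F k).IsClique s := by
    intro x hx y hy hxy
    simp only [hs, Finset.coe_union, Finset.coe_image, Finset.coe_univ, Set.image_univ,
      Set.mem_union, Set.mem_range] at hx hy
    have hx1 : x.1 = a ∨ x.1 = b := by
      rcases hx with ⟨j, rfl⟩ | ⟨j, rfl⟩ <;> simp
    have hy1 : y.1 = a ∨ y.1 = b := by
      rcases hy with ⟨j, rfl⟩ | ⟨j, rfl⟩ <;> simp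
    rcases hx1 with h1 | h1 <;> rcases hy1 with h2 | h2
    · exact Or.inl ⟨h1.trans h2.symm, hxy⟩
    · exact Or.inr (by rw [h1, h2]; exact hab)
    · exact Or.inr (by rw [h1, h2]; exact hab.symm)
    · exact Or.inl ⟨h1.trans h2.symm, hxy⟩
  have hcard : s.card = k a + k b := by
    rw [hs, Finset.card_union_of_disjoint, Finset.card_image_of_injective,
      Finset.card_image_of_injective]
    · simp
    · exact fun i j h => by simpa using h
    · exact fun i j h => by simpa using h
    · rw [Finset.disjoint_left]
      rintro x hx hx'
      simp only [Finset.mem_image, Finset.mem_univ, true_and] at hx hx'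
      obtain ⟨i, rfl⟩ := hx
      obtain ⟨j, hj⟩ := hx'
      exact hab.ne (congrArg Sigma.fst hj).symm
  rw [← hcard]
  exact IsClique.card_le_cliqueNum (tc := hclique)

/-- Key Claim in the degree-bound proof: if `u₁, u, v, v₁` is an induced path of `F` with
`u` and `v` of degree exactly 2 in `F`, and `|K_u| ≤ ω(G)/2` where `G` is the blow-up of
`F` by nonempty cliques, then every vertex of `K_v` has degree exactly
`|K_u| + |K_v| − 1 + |K_{v₁}|` in `G`, which is at most `(3/2)·ω(G) − 1`. -/
theorem blowup_degree_claim {α : Type*} [Fintype α] (F : SimpleGraph α) (k : α → ℕ)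
    (hk : ∀ w, 1 ≤ k w)
    (u₁ u v v₁ : α)
    (hd1 : u₁ ≠ u) (hd2 : u₁ ≠ v) (hd3 : u₁ ≠ v₁) (hd4 : u ≠ v) (hd5 : u ≠ v₁)
    (hd6 : v ≠ v₁)
    (ha1 : F.Adj u₁ u) (ha2 : F.Adj u v) (ha3 : F.Adj v v₁)
    (hn1 : ¬ F.Adj u₁ v) (hn2 : ¬ F.Adj u v₁) (hn3 : ¬ F.Adj u₁ v₁)
    (hdegu : (F.neighborSet u).ncard = 2) (hdegv : (F.neighborSet v).ncard = 2)
    (hku : 2 * k u ≤ (blowup F k).cliqueNum) :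
    ∀ i : Fin (k v),
      ((blowup F k).neighborSet ⟨v, i⟩).ncard = k u + k v - 1 + k v₁ ∧
      (((blowup F k).neighborSet ⟨v, i⟩).ncard : ℝ) ≤
        3 / 2 * (blowup F k).cliqueNum - 1 := by
  classical
  -- neighbors of v in F are exactly u and v₁
  have hNv : ({u, v₁} : Set α) = F.neighborSet v := by
    apply Set.eq_of_subset_of_ncard_le
    · rintro w (rfl | rfl)
      · exact ha2.symm
      · exact ha3
    · rw [hdegv, Set.ncard_pair hd5]
    · exact Set.toFinite _
  have hadj : ∀ w, F.Adj v w ↔ w = u ∨ w = v₁ := by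
    intro w
    constructor
    · intro h
      have : w ∈ ({u, v₁} : Set α) := hNv ▸ h
      simpa using this
    · rintro (rfl | rfl)
      · exact ha2.symm
      · exact ha3
  intro i
  have hset : (blowup F k).neighborSet ⟨v, i⟩ =
      (Sigma.mk u '' Set.univ) ∪ ((Sigma.mk v '' ({i}ᶜ : Set (Fin (k v)))) ∪ (Sigma.mk v₁ '' Set.univ)) := by
    ext ⟨w, j⟩
    simp only [mem_neighborSet, blowup, Set.mem_union, Set.mem_image, Set.mem_univ,
      Set.mem_compl_iff, Set.mem_singleton_iff]
    constructor
    · rintro (⟨h1, h2⟩ | h)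
      · refine Or.inr (Or.inl ?_)
        cases h1
        exact ⟨j, by rintro rfl; exact h2 rfl, rfl⟩
      · rcases (hadj w).mp h with rfl | rfl
        · exact Or.inl ⟨j, trivial, rfl⟩
        · exact Or.inr (Or.inr ⟨j, trivial, rfl⟩)
    · rintro (⟨j', -, h⟩ | ⟨j', hj', h⟩ | ⟨j', -, h⟩)
      · cases h; exact Or.inr ((hadj u).mpr (Or.inl rfl))
      · cases h
        exact Or.inl ⟨rfl, by intro he; exact hj' (by simpa using he.symm)⟩
      · cases h; exact Or.inr ((hadj v₁).mpr (Or.inr rfl))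
  have hinj : ∀ a : α, Function.Injective (fun x : Fin (k a) => (⟨a, x⟩ : Σ w, Fin (k w))) :=
    fun a x y h => by simpa using h
  have hcard : ((blowup F k).neighborSet ⟨v, i⟩).ncard = k u + ((k v - 1) + k v₁) := by
    rw [hset, Set.ncard_union_eq, Set.ncard_union_eq]
    · rw [Set.ncard_image_of_injective _ (hinj u), Set.ncard_image_of_injective _ (hinj v),
        Set.ncard_image_of_injective _ (hinj v₁)]
      simp only [Set.ncard_univ, Nat.card_eq_fintype_card, Fintype.card_fin]
      congr 1
      have : ({i}ᶜ : Set (Fin (k v))) = Set.univ \ {i} := by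
        simp [Set.compl_eq_univ_diff]
      rw [this, Set.ncard_diff (by simp), Set.ncard_univ, Set.ncard_singleton]
      simp
    · rw [Set.disjoint_left]
      rintro x ⟨j', -, rfl⟩ ⟨j'', -, h⟩
      exact hd6 (congrArg Sigma.fst h).symm
    · rw [Set.disjoint_left]
      rintro x ⟨j', -, rfl⟩ (⟨j'', -, h⟩ | ⟨j'', -, h⟩)
      · exact hd4 (congrArg Sigma.fst h).symm
      · exact hd5 (congrArg Sigma.fst h).symm
  have hvv₁ : k v + k v₁ ≤ (blowup F k).cliqueNum := blowup_edge_bound F k ha3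
  have hkv := hk v
  refine ⟨by omega, ?_⟩
  have h2 : 2 * ((blowup F k).neighborSet ⟨v, i⟩).ncard + 2 ≤ 3 * (blowup F k).cliqueNum := by
    omega
  have h3 := (Nat.cast_le (α := ℝ)).mpr h2
  push_cast at h3
  linarith
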